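/- Let p > 1, h > 0, ξ ∈ ℝ, and 0 < ε ≤ 1/(4·√(p-1)). If z is a complex root of ε²z² - z - 1 + p·e^{-zh} = 0 with ξ ≤ Re z ≤ 2(p-1), then |Im z| ≤ 2p·e^{-ξh}. -/

import Mathlib

/-- Complex roots of `ε²z² - z - 1 + p e^{-zh} = 0` with real part in `[ξ, 2(p-1)]`
have imaginary part bounded by `2p e^{-ξh}`. -/
theorem stmt_8 (p h ξ ε : ℝ) (hp : 1 < p) (hh : 0 < h)
    (hε0 : 0 < ε) (hε : ε ≤ 1 / (4 * Real.sqrt (p - 1)))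
    (z : ℂ)
    (hroot : (ε : ℂ) ^ 2 * z ^ 2 - z - 1 + (p : ℂ) * Complex.exp (-z * (h : ℂ)) = 0)
    (hre1 : ξ ≤ z.re) (hre2 : z.re ≤ 2 * (p - 1)) :
    |z.im| ≤ 2 * p * Real.exp (-ξ * h) := by
  have hp1 : (0:ℝ) < p - 1 := by linarith
  have hsq : 0 < Real.sqrt (p - 1) := Real.sqrt_pos.2 hp1
  have hε2 : ε ^ 2 ≤ 1 / (16 * (p - 1)) := by
    have h1 : ε ^ 2 ≤ (1 / (4 * Real.sqrt (p - 1))) ^ 2 :=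
      pow_le_pow_left₀ hε0.le hε 2
    have h2 : (1 / (4 * Real.sqrt (p - 1))) ^ 2 = 1 / (16 * (p - 1)) := by
      rw [div_pow, one_pow, mul_pow, Real.sq_sqrt hp1.le]; norm_num
    linarith
  have hfac : 1 / 2 ≤ 1 - 2 * ε ^ 2 * z.re := by
    rcases le_or_gt z.re 0 with h0 | h0
    · nlinarith [sq_nonneg ε]
    · have hm : ε ^ 2 * z.re ≤ 1 / (16 * (p - 1)) * (2 * (p - 1)) :=
        mul_le_mul hε2 hre2 h0.le (by positivity)
      have he : 1 / (16 * (p - 1)) * (2 * (p - 1)) = 1 / 8 := by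
        field_simp; ring
      linarith
  have key : (p : ℂ) * Complex.exp (-z * h) = -((ε : ℂ) ^ 2 * z ^ 2 - z - 1) := by
    linear_combination hroot
  have him : ((p : ℂ) * Complex.exp (-z * h)).im = z.im * (1 - 2 * ε ^ 2 * z.re) := by
    rw [key]
    simp [pow_two, Complex.mul_im, Complex.mul_re]
    ring
  have habs : ‖(p : ℂ) * Complex.exp (-z * h)‖ = p * Real.exp (-z.re * h) := by
    rw [norm_mul, Complex.norm_exp, Complex.norm_real, Real.norm_eq_abs, abs_of_pos (by linarith : (0:ℝ) < p)]
    congr 2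
    simp [Complex.mul_re]
  have hb : |z.im * (1 - 2 * ε ^ 2 * z.re)| ≤ p * Real.exp (-ξ * h) := by
    rw [← him]
    calc |((p : ℂ) * Complex.exp (-z * h)).im|
        ≤ ‖(p : ℂ) * Complex.exp (-z * h)‖ := Complex.abs_im_le_norm _
      _ = p * Real.exp (-z.re * h) := habs
      _ ≤ p * Real.exp (-ξ * h) := by
          apply mul_le_mul_of_nonneg_left _ (by linarith : (0:ℝ) ≤ p)
          exact Real.exp_le_exp.2 (by nlinarith)
  rw [abs_mul, abs_of_pos (by linarith : (0:ℝ) < 1 - 2 * ε ^ 2 * z.re)] at hb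
  nlinarith [abs_nonneg z.im, Real.exp_pos (-ξ * h)]
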